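/- In the variant Earley algorithm, a suffix item [β] is inserted in U_j if and only if there exist i, A, α, γ such that S ⇒* a_1⋯a_i A γ, (A → αβ) ∈ P, and α ⇒* a_{i+1}⋯a_j. -/

import Mathlib

/-! Formalization of Earley parsing and the Nederhof–Satta variant. -/

variable {T N : Type}

/-- A context-free grammar: a start nonterminal and a set of productions. -/
structure CFG (T N : Type) where
  initial : N
  rules : Set (N × List (Symbol T N))

/-- One rewriting step of the grammar. -/
def CFG.Produces (g : CFG T N) (u v : List (Symbol T N)) : Prop :=
  ∃ A α p q, (A, α) ∈ g.rules ∧ u = p ++ [Symbol.nonterminal A] ++ q ∧ v = p ++ α ++ q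

/-- The derivation relation ⇒* (reflexive-transitive closure of rewriting). -/
def CFG.Derives (g : CFG T N) : List (Symbol T N) → List (Symbol T N) → Prop :=
  Relation.ReflTransGen g.Produces

/-- The language of the grammar: { w | S ⇒* w }. -/
def CFG.language (g : CFG T N) : Set (List T) :=
  { w | g.Derives [Symbol.nonterminal g.initial] (w.map Symbol.terminal) }

/-- `inputSlice w i j` is the substring a_{i+1}⋯a_j of `w` (0-based: w[i..j)), as symbols. -/
def inputSlice (w : List T) (i j : ℕ) : List (Symbol T N) :=
  ((w.take j).drop i).map Symbol.terminal

/-- The least Earley table: `Earley g w A α β i j` means the dotted item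
[A → α • β] is inserted in E_{i,j}. -/
inductive Earley (g : CFG T N) (w : List T) :
    N → List (Symbol T N) → List (Symbol T N) → ℕ → ℕ → Prop where
  | init {α} : (g.initial, α) ∈ g.rules → Earley g w g.initial [] α 0 0
  | predict {B α A β i j γ} : Earley g w B α (Symbol.nonterminal A :: β) i j →
      (A, γ) ∈ g.rules → Earley g w A [] γ j j
  | scan {A α a β i j} : Earley g w A α (Symbol.terminal a :: β) i j →
      w[j]? = some a → Earley g w A (α ++ [Symbol.terminal a]) β i (j + 1)
  | complete {A α B β i k γ j} : Earley g w A α (Symbol.nonterminal B :: β) i k →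
      Earley g w B γ [] k j → (B, γ) ∈ g.rules →
      Earley g w A (α ++ [Symbol.nonterminal B]) β i j

mutual
  /-- Forward part of the variant: `VarU g w β j` means suffix item [β] ∈ U_j. -/
  inductive VarU (g : CFG T N) (w : List T) : List (Symbol T N) → ℕ → Prop where
    | init {α} : (g.initial, α) ∈ g.rules → VarU g w α 0
    | predict {A β j γ} : VarU g w (Symbol.nonterminal A :: β) j →
        (A, γ) ∈ g.rules → VarU g w γ j
    | scan {a β j} : VarU g w (Symbol.terminal a :: β) j → w[j]? = some a →
        VarU g w β (j + 1)
    | complete {B β k γ j} : VarU g w (Symbol.nonterminal B :: β) k → (B, γ) ∈ g.rules →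
        VarT g w γ k j → VarU g w β j

  /-- Backward part of the variant: `VarT g w β j m` means suffix item [β] ∈ T_{j,m}. -/
  inductive VarT (g : CFG T N) (w : List T) : List (Symbol T N) → ℕ → ℕ → Prop where
    | empty {m} : VarU g w [] m → VarT g w [] m m
    | scan {a β j m} : VarU g w (Symbol.terminal a :: β) j → w[j]? = some a →
        VarT g w β (j + 1) m → VarT g w (Symbol.terminal a :: β) j m
    | complete {B β k γ j m} : VarU g w (Symbol.nonterminal B :: β) k → (B, γ) ∈ g.rules →
        VarT g w γ k j → VarT g w β j m → VarT g w (Symbol.nonterminal B :: β) k m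
end

section EarleyAux

variable {g : CFG T N} {w : List T}

/-! ### Basic derivation lemmas -/

lemma produces_rule {A : N} {ρ : List (Symbol T N)} (hr : (A, ρ) ∈ g.rules)
    (p q : List (Symbol T N)) :
    g.Produces (p ++ Symbol.nonterminal A :: q) (p ++ ρ ++ q) :=
  ⟨A, ρ, p, q, hr, by simp, rfl⟩

lemma produces_append_left {u v : List (Symbol T N)} (h : g.Produces u v)
    (p : List (Symbol T N)) : g.Produces (p ++ u) (p ++ v) := by
  obtain ⟨A, α, x, y, hr, hu, hv⟩ := h
  exact ⟨A, α, p ++ x, y, hr, by simp [hu], by simp [hv]⟩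

lemma produces_append_right {u v : List (Symbol T N)} (h : g.Produces u v)
    (q : List (Symbol T N)) : g.Produces (u ++ q) (v ++ q) := by
  obtain ⟨A, α, x, y, hr, hu, hv⟩ := h
  exact ⟨A, α, x, y ++ q, hr, by simp [hu], by simp [hv]⟩

lemma derives_append_left {u v : List (Symbol T N)} (h : g.Derives u v)
    (p : List (Symbol T N)) : g.Derives (p ++ u) (p ++ v) :=
  Relation.ReflTransGen.lift (p := g.Produces) (p ++ ·) (fun _ _ hab => produces_append_left hab p) _ _ h

lemma derives_append_right {u v : List (Symbol T N)} (h : g.Derives u v)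
    (q : List (Symbol T N)) : g.Derives (u ++ q) (v ++ q) :=
  Relation.ReflTransGen.lift (p := g.Produces) (· ++ q) (fun _ _ hab => produces_append_right hab q) _ _ h

lemma derives_append_congr {u u' v v' : List (Symbol T N)} (h1 : g.Derives u u')
    (h2 : g.Derives v v') : g.Derives (u ++ v) (u' ++ v') :=
  (derives_append_right h1 v).trans (derives_append_left h2 u')

/-! ### Slice lemmas -/

lemma slice_eq (w : List T) (i j : ℕ) :
    inputSlice (N := N) w i j = ((w.drop i).take (j - i)).map Symbol.terminal := by
  unfold inputSlice; rw [List.drop_take]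

lemma slice_self (w : List T) (j : ℕ) : inputSlice (N := N) w j j = [] := by
  simp [slice_eq]

lemma take_append_slice {i j : ℕ} (h : i ≤ j) :
    (w.take i).map (Symbol.terminal (N := N)) ++ inputSlice w i j
      = (w.take j).map Symbol.terminal := by
  rw [slice_eq, ← List.map_append]
  congr 1
  have h1 : j = i + (j - i) := by omega
  have h2 : i + (j - i) - i = j - i := by omega
  rw [h1, List.take_add, h2]

lemma slice_append_slice {i k j : ℕ} (h1 : i ≤ k) (h2 : k ≤ j) :
    inputSlice (N := N) w i k ++ inputSlice w k j = inputSlice w i j := by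
  rw [slice_eq, slice_eq, slice_eq, ← List.map_append]
  congr 1
  have hd : w.drop k = (w.drop i).drop (k - i) := by rw [List.drop_drop]; congr 1; omega
  have hj : j - i = (k - i) + (j - k) := by omega
  rw [hd, hj, List.take_add]

lemma slice_singleton {j : ℕ} {a : T} (ha : w[j]? = some a) :
    inputSlice (N := N) w j (j + 1) = [Symbol.terminal a] := by
  rw [slice_eq]
  have h0 : (w.drop j)[0]? = some a := by rw [List.getElem?_drop]; simpa using ha
  cases hdw : w.drop j with
  | nil => rw [hdw] at h0; simp at h0
  | cons b t =>
    rw [hdw] at h0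
    simp at h0
    simp [h0]

lemma slice_snoc {i j : ℕ} {a : T} (hij : i ≤ j) (ha : w[j]? = some a) :
    inputSlice (N := N) w i j ++ [Symbol.terminal a] = inputSlice w i (j + 1) := by
  rw [← slice_append_slice (w := w) (i := i) (k := j) (j := j + 1) hij (by omega),
    slice_singleton ha]

lemma slice_len {i j : ℕ} (h1 : i ≤ j) (h2 : j ≤ w.length) :
    (inputSlice (N := N) w i j).length = j - i := by
  rw [slice_eq]; simp; omega

lemma slice_nil_eq {i j : ℕ} (h : inputSlice (N := N) w i j = []) (h1 : i ≤ j)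
    (h2 : j ≤ w.length) : i = j := by
  have := congrArg List.length h
  rw [slice_len h1 h2] at this
  simp at this
  omega

lemma slice_cons_elim {a : T} {s : List (Symbol T N)} {j m : ℕ}
    (h : inputSlice w j m = Symbol.terminal a :: s) (hjm : j ≤ m) (hm : m ≤ w.length) :
    w[j]? = some a ∧ inputSlice (N := N) w (j + 1) m = s ∧ j + 1 ≤ m := by
  have hlen := congrArg List.length h
  rw [slice_len hjm hm] at hlen
  simp at hlen
  have hj1 : j + 1 ≤ m := by omega
  have hj : j < w.length := by omega
  have hget : w[j]? = some (w.get ⟨j, hj⟩) := List.getElem?_eq_getElem hj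
  have hsplit := (slice_append_slice (N := N) (w := w) (i := j) (k := j + 1) (j := m)
    (by omega) hj1).symm
  rw [hsplit, slice_singleton hget] at h
  simp at h
  obtain ⟨h1, h2⟩ := h
  exact ⟨by rw [hget]; simp [List.get_eq_getElem, h1], h2, hj1⟩

/-! ### Soundness -/

lemma derive_prefix_step {i j : ℕ} {A' A : N} {α' γ' β : List (Symbol T N)}
    (hij : i ≤ j)
    (hd : g.Derives [Symbol.nonterminal g.initial]
      ((w.take i).map Symbol.terminal ++ Symbol.nonterminal A' :: γ'))
    (hrule : (A', α' ++ Symbol.nonterminal A :: β) ∈ g.rules)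
    (hα : g.Derives α' (inputSlice w i j)) :
    g.Derives [Symbol.nonterminal g.initial]
      ((w.take j).map Symbol.terminal ++ Symbol.nonterminal A :: (β ++ γ')) := by
  have s1 : g.Derives ((w.take i).map Symbol.terminal ++ Symbol.nonterminal A' :: γ')
      ((w.take i).map Symbol.terminal ++ (α' ++ (Symbol.nonterminal A :: (β ++ γ')))) := by
    have := produces_rule hrule ((w.take i).map Symbol.terminal) γ'
    exact Relation.ReflTransGen.single (by simpa [List.append_assoc] using this)
  have s2 : g.Derives
      ((w.take i).map Symbol.terminal ++ (α' ++ (Symbol.nonterminal A :: (β ++ γ'))))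
      ((w.take i).map Symbol.terminal ++ (inputSlice w i j ++ (Symbol.nonterminal A :: (β ++ γ')))) :=
    derives_append_left (derives_append_right hα _) _
  have s3 : (w.take i).map (Symbol.terminal (N := N)) ++
      (inputSlice w i j ++ (Symbol.nonterminal A :: (β ++ γ')))
      = (w.take j).map Symbol.terminal ++ Symbol.nonterminal A :: (β ++ γ') := by
    rw [← List.append_assoc, take_append_slice hij]
  exact hd.trans (s1.trans (s3 ▸ s2))

/-- Soundness statement for `VarU`. -/
def SndU (g : CFG T N) (w : List T) (β : List (Symbol T N)) (j : ℕ) : Prop :=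
  ∃ i A α γ, i ≤ j ∧
    g.Derives [Symbol.nonterminal g.initial]
      ((w.take i).map Symbol.terminal ++ Symbol.nonterminal A :: γ) ∧
    (A, α ++ β) ∈ g.rules ∧
    g.Derives α (inputSlice w i j)

/-- Soundness statement for `VarT`. -/
def SndT (g : CFG T N) (w : List T) (β : List (Symbol T N)) (j m : ℕ) : Prop :=
  j ≤ m ∧ g.Derives β (inputSlice w j m)

theorem soundU {β : List (Symbol T N)} {j : ℕ} (h : VarU g w β j) : SndU g w β j := by
  refine VarU.rec (g := g) (w := w)
    (motive_1 := fun β j _ => SndU g w β j)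
    (motive_2 := fun β j m _ => SndT g w β j m)
    ?_ ?_ ?_ ?_ ?_ ?_ ?_ h
  · -- init
    intro α hr
    exact ⟨0, g.initial, [], [], le_rfl, by simpa [CFG.Derives] using Relation.ReflTransGen.refl,
      by simpa using hr, by rw [slice_self]; exact Relation.ReflTransGen.refl⟩
  · -- predict
    intro A β j γ h1 hr ih
    obtain ⟨i, A', α', γ', hij, hd, hrule, hα⟩ := ih
    exact ⟨j, A, [], β ++ γ', le_rfl, derive_prefix_step hij hd hrule hα,
      by simpa using hr, by rw [slice_self]; exact Relation.ReflTransGen.refl⟩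
  · -- scan
    intro a β j h1 ha ih
    obtain ⟨i, A, α, γ, hij, hd, hrule, hα⟩ := ih
    refine ⟨i, A, α ++ [Symbol.terminal a], γ, by omega, hd,
      by simpa [List.append_assoc] using hrule, ?_⟩
    have := derives_append_right hα [Symbol.terminal a]
    rwa [slice_snoc hij ha] at this
  · -- complete (U)
    intro B β k γ j h1 hr h2 ihU ihT
    obtain ⟨i, A, α, γ', hik, hd, hrule, hα⟩ := ihU
    obtain ⟨hkj, hγ0⟩ := ihT
    refine ⟨i, A, α ++ [Symbol.nonterminal B], γ', by omega, hd,
      by simpa [List.append_assoc] using hrule, ?_⟩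
    have s1 := derives_append_right hα [Symbol.nonterminal B]
    have s2 := Relation.ReflTransGen.single (produces_rule hr (inputSlice (N := N) w i k) [])
    have s3 := derives_append_left hγ0 (inputSlice (N := N) w i k)
    have s4 : g.Derives (α ++ [Symbol.nonterminal B]) (inputSlice w i k ++ inputSlice w k j) :=
      s1.trans ((by simpa [CFG.Derives] using s2 :
        g.Derives (inputSlice w i k ++ [Symbol.nonterminal B]) (inputSlice w i k ++ γ)).trans s3)
    rwa [slice_append_slice hik hkj] at s4
  · -- empty (T)
    intro m hU _
    exact ⟨le_rfl, by rw [slice_self]; exact Relation.ReflTransGen.refl⟩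
  · -- scan (T)
    intro a β j m h1 ha h3 _ ih
    obtain ⟨h1m, hβ⟩ := ih
    refine ⟨by omega, ?_⟩
    have s1 := derives_append_left hβ [Symbol.terminal a]
    have e : [Symbol.terminal a] ++ inputSlice w (j + 1) m = inputSlice (N := N) w j m := by
      rw [← slice_singleton ha, slice_append_slice (by omega) h1m]
    rw [e] at s1
    exact s1
  · -- complete (T)
    intro B β k γ j m h1 hr h2 h3 _ ih2 ih3
    obtain ⟨hkj, hγ0⟩ := ih2
    obtain ⟨hjm, hβ⟩ := ih3
    refine ⟨by omega, ?_⟩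
    have s1 := Relation.ReflTransGen.single (produces_rule hr [] β)
    have s2 := derives_append_congr hγ0 hβ
    have s3 := (by simpa [CFG.Derives] using s1 :
      g.Derives (Symbol.nonterminal B :: β) (γ ++ β)).trans s2
    rwa [slice_append_slice hkj hjm] at s3

/-! ### Step-counted derivations -/

inductive DerivesIn (g : CFG T N) : List (Symbol T N) → List (Symbol T N) → ℕ → Prop where
  | refl (u) : DerivesIn g u u 0
  | head {u v z n} : g.Produces u v → DerivesIn g v z n → DerivesIn g u z (n + 1)

lemma derives_iff_derivesIn {u v : List (Symbol T N)} :
    g.Derives u v ↔ ∃ n, DerivesIn g u v n := by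
  constructor
  · intro h
    induction h using Relation.ReflTransGen.head_induction_on with
    | refl => exact ⟨0, .refl _⟩
    | head hp _ ih => obtain ⟨n, hn⟩ := ih; exact ⟨n + 1, .head hp hn⟩
  · rintro ⟨n, h⟩
    induction h with
    | refl => exact Relation.ReflTransGen.refl
    | head hp _ ih => exact Relation.ReflTransGen.head hp ih

lemma DerivesIn.zero_eq {u v : List (Symbol T N)} (h : DerivesIn g u v 0) : u = v := by
  cases h; rfl

lemma DerivesIn.terminal_stuck {u : List T} {v : List (Symbol T N)} {n : ℕ}
    (h : DerivesIn g (u.map Symbol.terminal) v n) :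
    v = u.map Symbol.terminal ∧ n = 0 := by
  cases h with
  | refl => exact ⟨rfl, rfl⟩
  | head hp _ =>
    obtain ⟨A, α, p, q, _, hu, _⟩ := hp
    exfalso
    have : Symbol.nonterminal A ∈ u.map (Symbol.terminal (N := N)) := by rw [hu]; simp
    simp at this

lemma DerivesIn.nt_head {B : N} {v : List (Symbol T N)} {n : ℕ}
    (h : DerivesIn g [Symbol.nonterminal B] v (n + 1)) :
    ∃ σ, (B, σ) ∈ g.rules ∧ DerivesIn g σ v n := by
  cases h with
  | head hp h2 =>
    obtain ⟨A, α, p, q, hr, hu, hv⟩ := hp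
    have hl := congrArg List.length hu
    simp at hl
    have hp0 : p = [] := List.length_eq_zero_iff.mp (by omega)
    have hq0 : q = [] := List.length_eq_zero_iff.mp (by omega)
    subst hp0; subst hq0
    simp at hu hv
    subst hu; subst hv
    exact ⟨_, hr, h2⟩

lemma append_eq_cons_split {x y p q : List (Symbol T N)} {s : Symbol T N}
    (h : x ++ y = p ++ s :: q) :
    (∃ x2, x = p ++ s :: x2 ∧ q = x2 ++ y) ∨ (∃ p2, y = p2 ++ s :: q ∧ p = x ++ p2) := by
  rcases List.append_eq_append_iff.mp h with ⟨a', hp, hy⟩ | ⟨c', hx, hq⟩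
  · exact Or.inr ⟨a', hy, hp⟩
  · cases c' with
    | nil => exact Or.inr ⟨[], by simpa using hq.symm, by simpa using hx.symm⟩
    | cons s' c'' =>
      have hq' : s = s' ∧ q = c'' ++ y := by
        have := hq; simp at this; exact ⟨this.1, this.2⟩
      obtain ⟨rfl, hq2⟩ := hq'
      exact Or.inl ⟨c'', by rw [hx], hq2⟩

lemma DerivesIn.append_split {x y v : List (Symbol T N)} {n : ℕ}
    (h : DerivesIn g (x ++ y) v n) :
    ∃ v1 v2 n1 n2, v = v1 ++ v2 ∧ n1 + n2 = n ∧
      DerivesIn g x v1 n1 ∧ DerivesIn g y v2 n2 := by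
  generalize hxy : x ++ y = u at h
  induction h generalizing x y with
  | refl u' => exact ⟨x, y, 0, 0, hxy.symm, rfl, .refl _, .refl _⟩
  | head hp h2 ih =>
    obtain ⟨A, α, p, q, hr, hu, hv⟩ := hp
    subst hxy
    have hu' : x ++ y = p ++ Symbol.nonterminal A :: q := by simpa using hu
    rcases append_eq_cons_split hu' with ⟨x2, hx, hq⟩ | ⟨p2, hy, hp'⟩
    · -- nonterminal inside x
      obtain ⟨v1, v2, n1, n2, hz, hn, d1, d2⟩ := ih (x := p ++ α ++ x2) (y := y)
        (by rw [hv, hq]; simp)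
      refine ⟨v1, v2, n1 + 1, n2, hz, by omega, ?_, d2⟩
      have hstep : g.Produces x (p ++ α ++ x2) := by
        rw [hx]; exact produces_rule hr p x2
      exact .head hstep d1
    · -- nonterminal inside y
      obtain ⟨v1, v2, n1, n2, hz, hn, d1, d2⟩ := ih (x := x) (y := p2 ++ α ++ q)
        (by rw [hv, hp']; simp)
      refine ⟨v1, v2, n1, n2 + 1, hz, by omega, d1, ?_⟩
      have hstep : g.Produces y (p2 ++ α ++ q) := by
        rw [hy]; exact produces_rule hr p2 q
      exact .head hstep d2

/-! ### Slice splitting -/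

lemma slice_split_append {u1 u2 : List T} {j m : ℕ}
    (h : inputSlice (N := N) w j m = u1.map Symbol.terminal ++ u2.map Symbol.terminal)
    (hjm : j ≤ m) (hm : m ≤ w.length) :
    j + u1.length ≤ m ∧ inputSlice (N := N) w j (j + u1.length) = u1.map Symbol.terminal ∧
      inputSlice (N := N) w (j + u1.length) m = u2.map Symbol.terminal := by
  induction u1 generalizing j with
  | nil =>
    refine ⟨by simpa using hjm, by simpa using slice_self w j, by simpa using h⟩
  | cons a u1' ih =>
    have h' : inputSlice (N := N) w j m
        = Symbol.terminal a :: (u1'.map Symbol.terminal ++ u2.map Symbol.terminal) := by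
      simpa using h
    obtain ⟨hget, hsl, hj1⟩ := slice_cons_elim h' (by omega) hm
    obtain ⟨hk, hs1, hs2⟩ := ih hsl hj1
    have e1 : j + (a :: u1').length = (j + 1) + u1'.length := by simp; omega
    refine ⟨by omega, ?_, ?_⟩
    · rw [e1, ← slice_append_slice (w := w) (i := j) (k := j + 1) (j := (j + 1) + u1'.length)
        (by omega) (by omega), slice_singleton hget, hs1]
      simp
    · rw [e1, hs2]

/-! ### Completeness: VarT -/

lemma varT_of_derivesIn : ∀ n (β : List (Symbol T N)) (u : List T) (j m : ℕ),
    DerivesIn g β (u.map Symbol.terminal) n →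
    u.map Symbol.terminal = inputSlice (N := N) w j m →
    VarU g w β j → j ≤ m → m ≤ w.length → VarT g w β j m := by
  intro n
  induction n using Nat.strong_induction_on with
  | _ n ihn =>
  intro β
  induction β with
  | nil =>
    intro u j m hd hu hU hjm hm
    obtain ⟨hv, _⟩ := DerivesIn.terminal_stuck (u := ([] : List T)) (by simpa using hd)
    have hnil : inputSlice (N := N) w j m = [] := by rw [← hu, hv]; simp
    have : j = m := slice_nil_eq hnil hjm hm
    subst this
    exact VarT.empty hU
  | cons X β' ihβ =>
    intro u j m hd hu hU hjm hm
    obtain ⟨v1, v2, n1, n2, hv, hn, d1, d2⟩ := DerivesIn.append_split (x := [X]) (y := β') hd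
    obtain ⟨u1, u2, rfl, hv1, hv2⟩ := List.map_eq_append_iff.mp hv
    subst hv1; subst hv2
    cases X with
    | terminal a =>
      obtain ⟨hv1', hn1⟩ := DerivesIn.terminal_stuck (u := [a]) (by simpa using d1)
      have hu' : inputSlice (N := N) w j m = Symbol.terminal a :: u2.map Symbol.terminal := by
        rw [← hu, List.map_append, hv1']; simp
      obtain ⟨hget, hslice, hjm'⟩ := slice_cons_elim hu' hjm hm
      have hU' : VarU g w β' (j + 1) := VarU.scan hU hget
      have hn2 : n2 = n := by omega
      have hT' : VarT g w β' (j + 1) m := ihβ u2 (j + 1) m (hn2 ▸ d2) hslice.symm hU' hjm' hm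
      exact VarT.scan hU hget hT'
    | nonterminal B =>
      cases n1 with
      | zero =>
        exfalso
        have h0 := d1.zero_eq
        cases u1 <;> simp at h0
      | succ n1' =>
        obtain ⟨σ, hrσ, dσ⟩ := DerivesIn.nt_head d1
        obtain ⟨hk, hs1, hs2⟩ := slice_split_append (u1 := u1) (u2 := u2)
          (by rw [← hu]; simp) hjm hm
        have hUσ : VarU g w σ j := VarU.predict hU hrσ
        have hTσ : VarT g w σ j (j + u1.length) :=
          ihn n1' (by omega) σ u1 j (j + u1.length) dσ hs1.symm hUσ (by omega) (by omega)
        have hUβ' : VarU g w β' (j + u1.length) := VarU.complete hU hrσ hTσ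
        have hTβ' : VarT g w β' (j + u1.length) m :=
          ihn n2 (by omega) β' u2 (j + u1.length) m d2 hs2.symm hUβ' hk hm
        exact VarT.complete hU hrσ hTσ hTβ'

/-! ### Completeness: advancing over one symbol and a sequence -/

lemma varU_step {X : Symbol T N} {θ : List (Symbol T N)} {u : List T} {i k n : ℕ}
    (hd : DerivesIn g [X] (u.map Symbol.terminal) n)
    (hU : VarU g w (X :: θ) i)
    (hu : u.map Symbol.terminal = inputSlice (N := N) w i k)
    (hik : i ≤ k) (hk : k ≤ w.length) : VarU g w θ k := by
  cases X with
  | terminal a =>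
    obtain ⟨hv, _⟩ := DerivesIn.terminal_stuck (u := [a]) (by simpa using hd)
    have h1 : inputSlice (N := N) w i k = Symbol.terminal a :: ([] : List (Symbol T N)) := by
      rw [← hu, hv]; simp
    obtain ⟨hget, hsl, hik'⟩ := slice_cons_elim h1 hik hk
    have : i + 1 = k := slice_nil_eq hsl hik' hk
    exact this ▸ VarU.scan hU hget
  | nonterminal B =>
    cases n with
    | zero =>
      exfalso
      have h0 := hd.zero_eq
      cases u <;> simp at h0
    | succ n' =>
      obtain ⟨σ, hrσ, dσ⟩ := DerivesIn.nt_head hd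
      have hUσ : VarU g w σ i := VarU.predict hU hrσ
      have hTσ : VarT g w σ i k := varT_of_derivesIn n' σ u i k dσ hu hUσ hik hk
      exact VarU.complete hU hrσ hTσ

lemma varU_advance : ∀ (α : List (Symbol T N)) {β : List (Symbol T N)} {u : List T} {i j n : ℕ},
    DerivesIn g α (u.map Symbol.terminal) n →
    u.map Symbol.terminal = inputSlice (N := N) w i j →
    VarU g w (α ++ β) i → i ≤ j → j ≤ w.length → VarU g w β j := by
  intro α
  induction α with
  | nil =>
    intro β u i j n hd hu hU hij hj
    obtain ⟨hv, _⟩ := DerivesIn.terminal_stuck (u := ([] : List T)) (by simpa using hd)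
    have hnil : inputSlice (N := N) w i j = [] := by rw [← hu, hv]; simp
    have : i = j := slice_nil_eq hnil hij hj
    subst this
    simpa using hU
  | cons X α' ih =>
    intro β u i j n hd hu hU hij hj
    obtain ⟨v1, v2, n1, n2, hv, hn, d1, d2⟩ := DerivesIn.append_split (x := [X]) (y := α') hd
    obtain ⟨u1, u2, rfl, hv1, hv2⟩ := List.map_eq_append_iff.mp hv
    subst hv1; subst hv2
    obtain ⟨hk, hs1, hs2⟩ := slice_split_append (u1 := u1) (u2 := u2)
      (by rw [← hu]; simp) hij hj
    have hU2 : VarU g w (α' ++ β) (i + u1.length) :=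
      varU_step d1 (by simpa using hU) hs1.symm (by omega) (by omega)
    exact ih d2 hs2.symm hU2 hk hj

/-! ### Completeness: reaching a predicted item -/

lemma terminal_cons_split {v1 v2 γ : List (Symbol T N)} {u : List T} {A : N}
    (h : v1 ++ v2 = u.map Symbol.terminal ++ Symbol.nonterminal A :: γ) :
    (∃ γ1, v1 = u.map Symbol.terminal ++ Symbol.nonterminal A :: γ1 ∧ γ = γ1 ++ v2) ∨
    (∃ u1 u2, u = u1 ++ u2 ∧ v1 = u1.map Symbol.terminal ∧
      v2 = u2.map Symbol.terminal ++ Symbol.nonterminal A :: γ) := by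
  rcases List.append_eq_append_iff.mp h with ⟨a', ha1, ha2⟩ | ⟨c', hc1, hc2⟩
  · obtain ⟨u1, u2, rfl, h1, h2⟩ := List.map_eq_append_iff.mp ha1
    exact Or.inr ⟨u1, u2, rfl, h1.symm, by rw [ha2, ← h2]⟩
  · cases c' with
    | nil =>
      exact Or.inr ⟨u, [], by simp, by simpa using hc1, by simpa using hc2.symm⟩
    | cons s c'' =>
      have hc2' : Symbol.nonterminal A = s ∧ γ = c'' ++ v2 := by
        have := hc2; simp at this; exact this
      obtain ⟨hs, hγ⟩ := hc2'
      subst hs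
      exact Or.inl ⟨c'', by rw [hc1], hγ⟩

lemma varU_reach : ∀ n (ρ : List (Symbol T N)) (u : List T) (A : N)
    (γ θ : List (Symbol T N)) (i k : ℕ),
    DerivesIn g ρ (u.map Symbol.terminal ++ Symbol.nonterminal A :: γ) n →
    VarU g w (ρ ++ θ) i →
    u.map Symbol.terminal = inputSlice (N := N) w i k →
    i ≤ k → k ≤ w.length →
    ∃ δ, VarU g w (Symbol.nonterminal A :: δ) k := by
  intro n
  induction n using Nat.strong_induction_on with
  | _ n ihn =>
  intro ρ
  induction ρ with
  | nil =>
    intro u A γ θ i k hd hU hu hik hk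
    obtain ⟨hv, _⟩ := DerivesIn.terminal_stuck (u := ([] : List T)) (by simpa using hd)
    exact absurd hv.symm (by simp)
  | cons X ρ' ihρ =>
    intro u A γ θ i k hd hU hu hik hk
    obtain ⟨v1, v2, n1, n2, hv, hn, d1, d2⟩ := DerivesIn.append_split (x := [X]) (y := ρ') hd
    rcases terminal_cons_split hv.symm with ⟨γ1, hv1, hγ⟩ | ⟨u1, u2, rfl, hv1, hv2⟩
    · -- the nonterminal A is produced by X
      cases X with
      | terminal a =>
        exfalso
        obtain ⟨hveq, _⟩ := DerivesIn.terminal_stuck (u := [a]) (by simpa using d1)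
        rw [hveq] at hv1
        cases u <;> simp at hv1
      | nonterminal B =>
        cases n1 with
        | zero =>
          have h0 := d1.zero_eq
          rw [hv1] at h0
          cases u with
          | cons b u' => simp at h0
          | nil =>
            simp at h0
            obtain ⟨hAB, hγ1⟩ := h0
            have hik' : i = k := slice_nil_eq (by rw [← hu]; simp) hik hk
            subst hik'
            subst hAB
            exact ⟨ρ' ++ θ, by simpa using hU⟩
        | succ n1' =>
          obtain ⟨σ, hrσ, dσ⟩ := DerivesIn.nt_head d1
          have hUσ : VarU g w (σ ++ ([] : List (Symbol T N))) i := by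
            simpa using VarU.predict (by simpa using hU :
              VarU g w (Symbol.nonterminal B :: (ρ' ++ θ)) i) hrσ
          exact ihn n1' (by omega) σ u A γ1 [] i k (hv1 ▸ dσ) hUσ hu hik hk
    · -- A lies in the part derived from ρ'
      obtain ⟨hk', hs1, hs2⟩ := slice_split_append (u1 := u1) (u2 := u2)
        (by rw [← hu]; simp) hik hk
      have hU2 : VarU g w (ρ' ++ θ) (i + u1.length) :=
        varU_step (hv1 ▸ d1) (by simpa using hU) hs1.symm (by omega) (by omega)
      rcases lt_or_eq_of_le (show n2 ≤ n by omega) with h2 | h2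
      · exact ihn n2 h2 ρ' u2 A γ θ (i + u1.length) k (hv2 ▸ d2) hU2 hs2.symm hk' hk
      · exact ihρ u2 A γ θ (i + u1.length) k (h2 ▸ hv2 ▸ d2) hU2 hs2.symm hk' hk

end EarleyAux

/-- [β] ∈ U_j iff there are i, A, α, γ with S ⇒* a_1⋯a_i A γ,
(A → αβ) ∈ P and α ⇒* a_{i+1}⋯a_j. -/
theorem variant_U_characterization (g : CFG T N) (w : List T)
    (β : List (Symbol T N)) (j : ℕ) (hj : j ≤ w.length) :
    VarU g w β j ↔
      ∃ i A α γ, i ≤ j ∧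
        g.Derives [Symbol.nonterminal g.initial]
          ((w.take i).map Symbol.terminal ++ Symbol.nonterminal A :: γ) ∧
        (A, α ++ β) ∈ g.rules ∧
        g.Derives α (inputSlice w i j) := by
  constructor
  · intro h
    exact soundU h
  · rintro ⟨i, A, α, γ, hij, hS, hrule, hα⟩
    obtain ⟨n, hn⟩ := derives_iff_derivesIn.mp hS
    obtain ⟨mα, hmα⟩ := derives_iff_derivesIn.mp hα
    have hiw : i ≤ w.length := le_trans hij hj
    have hUαβ : VarU g w (α ++ β) i := by
      cases n with
      | zero =>
        have h0 := hn.zero_eq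
        cases htk : w.take i with
        | cons b t => rw [htk] at h0; simp at h0
        | nil =>
          rw [htk] at h0
          simp at h0
          obtain ⟨hSA, hγ⟩ := h0
          have hi0 : i = 0 := by
            rcases List.take_eq_nil_iff.mp htk with h | h
            · exact h
            · have : w.length = 0 := by rw [h]; rfl
              omega
          subst hi0
          rw [← hSA] at hrule
          exact VarU.init hrule
      | succ n' =>
        obtain ⟨ρ, hr, hd'⟩ := DerivesIn.nt_head hn
        have hU0 : VarU g w (ρ ++ ([] : List (Symbol T N))) 0 := by
          simpa using VarU.init hr
        obtain ⟨δ, hδ⟩ := varU_reach n' ρ (w.take i) A γ [] 0 i hd' hU0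
          (by simp [inputSlice]) (Nat.zero_le i) hiw
        exact VarU.predict hδ hrule
    exact varU_advance α hmα rfl hUαβ hij hj
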